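/- Any two fundamental domains for an action of a group G on a simplicial complex K by exchangeable vertices are simplicially isomorphic. -/

import Mathlib

variable {V : Type*}

def IsComplex (F : Set (Finset V)) : Prop :=
  (∀ s ∈ F, s.Nonempty) ∧ ∀ s ∈ F, ∀ t ⊆ s, t.Nonempty → t ∈ F

def IsAuto [DecidableEq V] (F : Set (Finset V)) (φ : Equiv.Perm V) : Prop :=
  ∀ s : Finset V, s ∈ F ↔ s.image φ ∈ F

def IsExchange [DecidableEq V] (F : Set (Finset V)) (u v : V) (φ : Equiv.Perm V) : Prop :=
  IsAuto F φ ∧ φ u = v ∧ φ v = u ∧ ∀ w : V, w ≠ u → w ≠ v → φ w = w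

def Exchangeable [DecidableEq V] (F : Set (Finset V)) (u v : V) : Prop :=
  ∃ φ : Equiv.Perm V, IsExchange F u v φ

def vertices (F : Set (Finset V)) : Set V := {v | ({v} : Finset V) ∈ F}

def quotFaces (F : Set (Finset V)) (G : Subgroup (Equiv.Perm V)) : Set (Finset (Set V)) :=
  {S | ∃ s ∈ F, (↑S : Set (Set V)) = (fun v => MulAction.orbit (↥G) v) '' ↑s}

def ActsByExch [DecidableEq V] (F : Set (Finset V)) (G : Subgroup (Equiv.Perm V)) : Prop :=
  ∃ M : Set (Equiv.Perm V), G = Subgroup.closure M ∧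
    ∀ φ ∈ M, ∃ u v : V, u ≠ v ∧ IsExchange F u v φ

def fullSubFaces (F : Set (Finset V)) (W : Set V) : Set (Finset V) :=
  {s ∈ F | ↑s ⊆ W}

set_option linter.unusedSectionVars false

section Aux
variable [DecidableEq V]

private def ExchRel (M : Set (Equiv.Perm V)) (a b : V) : Prop :=
  ∃ φ ∈ M, φ a = b ∧ a ≠ b

private lemma apply_mem_orbit {G : Subgroup (Equiv.Perm V)} {g : Equiv.Perm V}
    (hg : g ∈ G) (v : V) : g v ∈ MulAction.orbit (↥G) v := ⟨⟨g, hg⟩, rfl⟩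

private lemma exists_of_mem_orbit {G : Subgroup (Equiv.Perm V)} {v x : V}
    (h : x ∈ MulAction.orbit (↥G) v) : ∃ g : Equiv.Perm V, g ∈ G ∧ g v = x := by
  obtain ⟨⟨g, hg⟩, rfl⟩ := h; exact ⟨g, hg, rfl⟩

private lemma isAuto_of_mem {F : Set (Finset V)} {M : Set (Equiv.Perm V)}
    (hM : ∀ φ ∈ M, ∃ u v : V, u ≠ v ∧ IsExchange F u v φ)
    {g : Equiv.Perm V} (hg : g ∈ Subgroup.closure M) : IsAuto F g := by
  induction hg using Subgroup.closure_induction with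
  | mem φ hφ => obtain ⟨u, v, _, h⟩ := hM φ hφ; exact h.1
  | one => intro s; simp
  | mul x y hx hy px py =>
      intro s
      have h : s.image ⇑(x * y) = (s.image ⇑y).image ⇑x := by
        rw [Finset.image_image]; rfl
      rw [h, ← px, ← py]
  | inv x hx px =>
      intro s
      have h2 : (s.image ⇑x⁻¹).image ⇑x = s := by
        rw [Finset.image_image]
        simp [Function.comp_def]
      rw [px (s.image ⇑x⁻¹), h2]

private lemma path_to_smul {F : Set (Finset V)} {M : Set (Equiv.Perm V)}
    (hM : ∀ φ ∈ M, ∃ u v : V, u ≠ v ∧ IsExchange F u v φ)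
    {g : Equiv.Perm V} (hg : g ∈ Subgroup.closure M) :
    ∀ w : V, Relation.ReflTransGen (ExchRel M) w (g w) := by
  have hsymm : Symmetric (ExchRel M) := by
    rintro a b ⟨φ, hφ, hab, hne⟩
    obtain ⟨u, v, huv, _, hu, hv, hfix⟩ := hM φ hφ
    refine ⟨φ, hφ, ?_, hne.symm⟩
    rcases eq_or_ne a u with rfl | hau
    · rw [hu] at hab; subst hab; exact hv
    rcases eq_or_ne a v with rfl | hav
    · rw [hv] at hab; subst hab; exact hu
    · exact (hne ((hfix a hau hav).symm.trans hab)).elim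
  induction hg using Subgroup.closure_induction with
  | mem φ hφ =>
      intro w
      by_cases h : φ w = w
      · rw [h]
      · exact Relation.ReflTransGen.single ⟨φ, hφ, rfl, fun e => h e.symm⟩
  | one => intro w; exact Relation.ReflTransGen.refl
  | mul x y hx hy px py =>
      intro w
      rw [Equiv.Perm.mul_apply]
      exact (py w).trans (px (y w))
  | inv x hx px =>
      intro w
      have h := px (x⁻¹ w)
      rw [show x (x⁻¹ w) = w from Equiv.apply_symm_apply x w] at h
      exact (@Relation.ReflTransGen.stdSymm _ _ ⟨hsymm⟩).symm _ _ h

private lemma move_vertex {F : Set (Finset V)} {M : Set (Equiv.Perm V)}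
    {G : Subgroup (Equiv.Perm V)} (hGM : G = Subgroup.closure M)
    (hM : ∀ φ ∈ M, ∃ u v : V, u ≠ v ∧ IsExchange F u v φ)
    {s : Finset V} (hdist : ∀ a ∈ s, ∀ b ∈ s, a ∈ MulAction.orbit (↥G) b → a = b)
    {v w : V} (hv : v ∈ s) (hpath : Relation.ReflTransGen (ExchRel M) v w) :
    ∃ g : Equiv.Perm V, g ∈ G ∧ g v = w ∧ ∀ a ∈ s, a ≠ v → g a = a := by
  induction hpath with
  | refl => exact ⟨1, one_mem G, rfl, fun a _ _ => rfl⟩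
  | @tail x y hvx hE ih =>
      obtain ⟨g, hgG, hgv, hfix⟩ := ih
      obtain ⟨φ, hφM, hφx, hxy⟩ := hE
      have hφG : φ ∈ G := hGM ▸ Subgroup.subset_closure hφM
      refine ⟨φ * g, mul_mem hφG hgG, ?_, ?_⟩
      · rw [Equiv.Perm.mul_apply, hgv, hφx]
      · intro a ha hav
        rw [Equiv.Perm.mul_apply, hfix a ha hav]
        obtain ⟨u, u', huu', _, hu, hu', hfixφ⟩ := hM φ hφM
        have hxorb : x ∈ MulAction.orbit (↥G) v := hgv ▸ apply_mem_orbit hgG v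
        have hyorb : y ∈ MulAction.orbit (↥G) v := by
          have h := apply_mem_orbit hφG x
          rw [hφx, MulAction.orbit_eq_iff.2 hxorb] at h
          exact h
        have hax : a ≠ x := fun e => hav (hdist a ha v hv (e ▸ hxorb))
        have hay : a ≠ y := fun e => hav (hdist a ha v hv (e ▸ hyorb))
        rcases eq_or_ne x u with rfl | hxu
        · have hy : y = u' := by rw [← hφx, hu]
          exact hfixφ a hax (hy ▸ hay)
        rcases eq_or_ne x u' with rfl | hxu'
        · have hy : y = u := by rw [← hφx, hu']
          exact hfixφ a (hy ▸ hay) hax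
        · exact absurd ((hfixφ x hxu hxu').symm.trans hφx) hxy

private lemma push_into {F : Set (Finset V)} {M : Set (Equiv.Perm V)}
    {G : Subgroup (Equiv.Perm V)} (hGM : G = Subgroup.closure M)
    (hM : ∀ φ ∈ M, ∃ u v : V, u ≠ v ∧ IsExchange F u v φ)
    {W : Set V} (hrep : ∀ v ∈ vertices F, ∃! x : V, x ∈ W ∧ x ∈ MulAction.orbit (↥G) v)
    (s : Finset V) (hsF : s ∈ F) (hsV : ↑s ⊆ vertices F)
    (hdist : ∀ a ∈ s, ∀ b ∈ s, a ∈ MulAction.orbit (↥G) b → a = b) :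
    ∃ g : Equiv.Perm V, g ∈ G ∧ s.image ⇑g ∈ F ∧ ↑(s.image ⇑g) ⊆ W := by
  classical
  suffices h : ∀ n : ℕ, ∀ s : Finset V, s ∈ F → ↑s ⊆ vertices F →
      (∀ a ∈ s, ∀ b ∈ s, a ∈ MulAction.orbit (↥G) b → a = b) →
      (s.filter (fun a => a ∉ W)).card ≤ n →
      ∃ g : Equiv.Perm V, g ∈ G ∧ s.image ⇑g ∈ F ∧ ↑(s.image ⇑g) ⊆ W by
    exact h _ s hsF hsV hdist le_rfl
  intro n
  induction n with
  | zero =>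
      intro s hsF hsV hdist hcard
      refine ⟨1, one_mem G, ?_, ?_⟩
      · simpa using hsF
      · intro a ha
        simp only [Equiv.Perm.coe_one, Finset.image_id, Finset.mem_coe] at ha
        by_contra h
        have hmem : a ∈ s.filter (fun a => a ∉ W) := Finset.mem_filter.2 ⟨ha, h⟩
        rw [Nat.le_zero, Finset.card_eq_zero] at hcard
        rw [hcard] at hmem
        exact absurd hmem (Finset.notMem_empty a)
  | succ n ih =>
      intro s hsF hsV hdist hcard
      by_cases hsub : ∀ a ∈ s, a ∈ W
      · refine ⟨1, one_mem G, ?_, ?_⟩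
        · simpa using hsF
        · intro a ha
          simp only [Equiv.Perm.coe_one, Finset.image_id, Finset.mem_coe] at ha
          exact hsub a ha
      · push_neg at hsub
        obtain ⟨v, hvs, hvW⟩ := hsub
        have hvvert : v ∈ vertices F := hsV hvs
        obtain ⟨w, ⟨hwW, hworb⟩, -⟩ := hrep v hvvert
        obtain ⟨g₀, hg₀G, hg₀v⟩ := exists_of_mem_orbit hworb
        have hpath : Relation.ReflTransGen (ExchRel M) v w :=
          hg₀v ▸ path_to_smul hM (hGM ▸ hg₀G) v
        obtain ⟨g, hgG, hgv, hfix⟩ := move_vertex hGM hM hdist hvs hpath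
        have hauto : IsAuto F g := isAuto_of_mem hM (hGM ▸ hgG)
        have h1 : (s.erase v).image ⇑g = s.erase v := by
          rw [Finset.image_congr (g := id) (fun a ha => by
            simp only [id]
            exact hfix a (Finset.mem_of_mem_erase ha) (Finset.ne_of_mem_erase ha)),
            Finset.image_id]
        have himg : s.image ⇑g = insert w (s.erase v) := by
          conv_lhs => rw [← Finset.insert_erase hvs]
          rw [Finset.image_insert, hgv, h1]
        have htF : s.image ⇑g ∈ F := (hauto s).1 hsF
        have htV : ↑(s.image ⇑g) ⊆ vertices F := by
          intro x hx
          obtain ⟨a, ha, rfl⟩ := Finset.mem_image.1 hx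
          have h2 : ({a} : Finset V).image ⇑g ∈ F := (hauto {a}).1 (hsV ha)
          simpa [vertices, Finset.image_singleton] using h2
        have htdist : ∀ a ∈ s.image ⇑g, ∀ b ∈ s.image ⇑g,
            a ∈ MulAction.orbit (↥G) b → a = b := by
          intro a ha b hb hab
          obtain ⟨a', ha', rfl⟩ := Finset.mem_image.1 ha
          obtain ⟨b', hb', rfl⟩ := Finset.mem_image.1 hb
          have e1 : MulAction.orbit (↥G) (g b') = MulAction.orbit (↥G) b' :=
            MulAction.orbit_eq_iff.2 (apply_mem_orbit hgG b')
          have e2 : MulAction.orbit (↥G) (g a') = MulAction.orbit (↥G) b' :=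
            MulAction.orbit_eq_iff.2 (e1 ▸ hab)
          have h3 : a' ∈ MulAction.orbit (↥G) b' :=
            e2 ▸ MulAction.mem_orbit_symm.2 (apply_mem_orbit hgG a')
          rw [hdist a' ha' b' hb' h3]
        have hcard' : ((s.image ⇑g).filter (fun a => a ∉ W)).card ≤ n := by
          rw [himg, Finset.filter_insert, if_neg (not_not_intro hwW), Finset.filter_erase]
          have hvmem : v ∈ s.filter (fun a => a ∉ W) := Finset.mem_filter.2 ⟨hvs, hvW⟩
          have hce := Finset.card_erase_of_mem hvmem
          omega
        obtain ⟨g₂, hg₂G, hg₂F, hg₂W⟩ := ih (s.image ⇑g) htF htV htdist hcard'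
        have heq : s.image ⇑(g₂ * g) = (s.image ⇑g).image ⇑g₂ := by
          rw [Finset.image_image]; rfl
        exact ⟨g₂ * g, mul_mem hg₂G hgG, heq ▸ hg₂F, heq ▸ hg₂W⟩

end Aux

/-- Any two fundamental domains for an action of `G` on a simplicial complex `F` by
exchangeable vertices are simplicially isomorphic. -/
theorem fundamentalDomains_iso [DecidableEq V] (F : Set (Finset V)) (hF : IsComplex F)
    (G : Subgroup (Equiv.Perm V)) (hG : ActsByExch F G)
    (W₁ W₂ : Set V) (hW₁ : W₁ ⊆ vertices F) (hW₂ : W₂ ⊆ vertices F)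
    (hrep₁ : ∀ v ∈ vertices F, ∃! x : V, x ∈ W₁ ∧ x ∈ MulAction.orbit (↥G) v)
    (hrep₂ : ∀ v ∈ vertices F, ∃! x : V, x ∈ W₂ ∧ x ∈ MulAction.orbit (↥G) v) :
    ∃ f : V → V, Set.BijOn f W₁ W₂ ∧
      Set.BijOn (fun s : Finset V => s.image f) (fullSubFaces F W₁) (fullSubFaces F W₂) := by
  classical
  obtain ⟨M, hGM, hM⟩ := hG
  set f : V → V := fun v =>
    if h : ∃ x, x ∈ W₂ ∧ x ∈ MulAction.orbit (↥G) v then h.choose else v with hf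
  have hfspec : ∀ v ∈ vertices F, f v ∈ W₂ ∧ f v ∈ MulAction.orbit (↥G) v := by
    intro v hv
    have h := (hrep₂ v hv).exists
    simp only [hf, dif_pos h]
    exact h.choose_spec
  have hfuniq : ∀ v ∈ vertices F, ∀ x, x ∈ W₂ → x ∈ MulAction.orbit (↥G) v → x = f v := by
    intro v hv x hx hxorb
    obtain ⟨y, hy, hyu⟩ := hrep₂ v hv
    exact (hyu x ⟨hx, hxorb⟩).trans (hyu (f v) (hfspec v hv)).symm
  have hmaps : Set.MapsTo f W₁ W₂ := fun v hv => (hfspec v (hW₁ hv)).1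
  have hinj : Set.InjOn f W₁ := by
    intro a ha b hb hab
    have haV := hW₁ ha
    have hbV := hW₁ hb
    have h1 : a ∈ MulAction.orbit (↥G) (f a) := MulAction.mem_orbit_symm.2 (hfspec a haV).2
    have h2 : b ∈ MulAction.orbit (↥G) (f a) := by
      rw [hab]; exact MulAction.mem_orbit_symm.2 (hfspec b hbV).2
    have hfaV : f a ∈ vertices F := hW₂ (hfspec a haV).1
    obtain ⟨y, _, hyu⟩ := hrep₁ (f a) hfaV
    exact (hyu a ⟨ha, h1⟩).trans (hyu b ⟨hb, h2⟩).symm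
  have hsurj : Set.SurjOn f W₁ W₂ := by
    intro w hw
    have hwV := hW₂ hw
    obtain ⟨v, ⟨hvW, hvorb⟩, -⟩ := hrep₁ w hwV
    exact ⟨v, hvW, (hfuniq v (hW₁ hvW) w hw (MulAction.mem_orbit_symm.1 hvorb)).symm⟩
  have hdist : ∀ (W : Set V), W ⊆ vertices F →
      (∀ v ∈ vertices F, ∃! x : V, x ∈ W ∧ x ∈ MulAction.orbit (↥G) v) →
      ∀ s : Finset V, ↑s ⊆ W → ∀ a ∈ s, ∀ b ∈ s, a ∈ MulAction.orbit (↥G) b → a = b := by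
    intro W hWv hrep s hsW a ha b hb hab
    have hbV := hWv (hsW hb)
    obtain ⟨y, _, hyu⟩ := hrep b hbV
    exact (hyu a ⟨hsW ha, hab⟩).trans (hyu b ⟨hsW hb, MulAction.mem_orbit_self b⟩).symm
  have hmapsF : Set.MapsTo (fun s : Finset V => s.image f)
      (fullSubFaces F W₁) (fullSubFaces F W₂) := by
    rintro s ⟨hsF, hsW⟩
    have hsV : ↑s ⊆ vertices F := hsW.trans hW₁
    obtain ⟨g, hgG, hgF, hgW⟩ := push_into hGM hM hrep₂ s hsF hsV
      (hdist W₁ hW₁ hrep₁ s hsW)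
    have heq : s.image f = s.image ⇑g := Finset.image_congr (fun a ha => by
      have haV : a ∈ vertices F := hsV ha
      have hga : (g : Equiv.Perm V) a ∈ W₂ :=
        hgW (Finset.mem_coe.2 (Finset.mem_image_of_mem _ ha))
      exact (hfuniq a haV (g a) hga (apply_mem_orbit hgG a)).symm)
    show s.image f ∈ F ∧ ↑(s.image f) ⊆ W₂
    rw [heq]
    exact ⟨hgF, hgW⟩
  have hkey : ∀ s t : Finset V, ↑s ⊆ W₁ → ↑t ⊆ W₁ → s.image f = t.image f → s ⊆ t := by
    intro s t hsW htW hst a ha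
    have h : f a ∈ t.image f := hst ▸ Finset.mem_image_of_mem f ha
    obtain ⟨b, hb, hba⟩ := Finset.mem_image.1 h
    rwa [← hinj (htW hb) (hsW ha) hba]
  have hinjF : Set.InjOn (fun s : Finset V => s.image f) (fullSubFaces F W₁) := by
    rintro s ⟨_, hsW⟩ t ⟨_, htW⟩ hst
    exact Finset.Subset.antisymm (hkey s t hsW htW hst) (hkey t s htW hsW hst.symm)
  have hsurjF : Set.SurjOn (fun s : Finset V => s.image f)
      (fullSubFaces F W₁) (fullSubFaces F W₂) := by
    rintro t ⟨htF, htW⟩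
    have htV : ↑t ⊆ vertices F := htW.trans hW₂
    obtain ⟨g, hgG, hgF, hgW⟩ := push_into hGM hM hrep₁ t htF htV
      (hdist W₂ hW₂ hrep₂ t htW)
    refine ⟨t.image ⇑g, ⟨hgF, hgW⟩, ?_⟩
    show (t.image ⇑g).image f = t
    rw [Finset.image_image]
    have heqon : ∀ b ∈ t, (f ∘ ⇑g) b = id b := by
      intro b hb
      have hgbV : (g : Equiv.Perm V) b ∈ vertices F :=
        hW₁ (hgW (Finset.mem_coe.2 (Finset.mem_image_of_mem _ hb)))
      have h2 : b ∈ MulAction.orbit (↥G) (g b) :=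
        MulAction.mem_orbit_symm.2 (apply_mem_orbit hgG b)
      exact (hfuniq (g b) hgbV b (htW hb) h2).symm
    rw [Finset.image_congr (fun b hb => heqon b hb), Finset.image_id]
  exact ⟨f, ⟨hmaps, hinj, hsurj⟩, hmapsF, hinjF, hsurjF⟩
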